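/- arXiv:1012.5751 — 8 statements merged into one kernel-verified Lean document; each statement's English description precedes it below -/
import Mathlib

section
/- If a function f: ℝ → ℝ is detachable at every point of a closed interval [a,b] (i.e., for each x the limit as h → 0 of sgn(f(x+h) − f(x)) exists), then the image f([a,b]) is countable; in particular, f is a step function on [a,b] in the sense that it takes only countably many values. -/
open Filter Topology Set

/-- Right detachment: `lim_{h→0⁺} sgn (f (x+h) - f x) = L`. -/
def HasRightDet (f : ℝ → ℝ) (x L : ℝ) : Prop :=
  Filter.Tendsto (fun h : ℝ => Real.sign (f (x + h) - f x)) (𝓝[>] (0:ℝ)) (𝓝 L)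

/-- Left detachment: `lim_{h→0⁻} sgn (f (x+h) - f x) = L`. -/
def HasLeftDet (f : ℝ → ℝ) (x L : ℝ) : Prop :=
  Filter.Tendsto (fun h : ℝ => Real.sign (f (x + h) - f x)) (𝓝[<] (0:ℝ)) (𝓝 L)

/-- (Two-sided) detachment: `lim_{h→0} sgn (f (x+h) - f x) = L`. -/
def HasDet (f : ℝ → ℝ) (x L : ℝ) : Prop :=
  Filter.Tendsto (fun h : ℝ => Real.sign (f (x + h) - f x)) (𝓝[≠] (0:ℝ)) (𝓝 L)

/-- Signposted detachment: `lim_{h→0} sgn (h * (f (x+h) - f x)) = L`. -/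
def HasSignedDet (f : ℝ → ℝ) (x L : ℝ) : Prop :=
  Filter.Tendsto (fun h : ℝ => Real.sign (h * (f (x + h) - f x))) (𝓝[≠] (0:ℝ)) (𝓝 L)

/-- The set of values `f x` for `x ∈ (p,q)` such that `sgn (f z - f x) = c` for all
other `z ∈ (p,q)`. -/
def detS (f : ℝ → ℝ) (p q : ℚ) (c : ℝ) : Set ℝ :=
  {y | ∃ x : ℝ, (p:ℝ) < x ∧ x < q ∧ f x = y ∧
    ∀ z : ℝ, (p:ℝ) < z → z < q → z ≠ x → Real.sign (f z - f x) = c}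

lemma detS_subsingleton (f : ℝ → ℝ) (p q : ℚ) (c : ℝ) : (detS f p q c).Subsingleton := by
  rintro y1 ⟨x1, hp1, hq1, hf1, h1⟩ y2 ⟨x2, hp2, hq2, hf2, h2⟩
  by_cases hx : x1 = x2
  · rw [← hf1, ← hf2, hx]
  · have e1 := h1 x2 hp2 hq2 (Ne.symm hx)
    have e2 := h2 x1 hp1 hq1 hx
    have hneg : Real.sign (f x1 - f x2) = - Real.sign (f x2 - f x1) := by
      rw [← Real.sign_neg]; ring_nf
    rw [e1, e2] at hneg
    have hc0 : c = 0 := by linarith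
    have : f x2 - f x1 = 0 := Real.sign_eq_zero_iff.mp (by rw [e1, hc0])
    rw [← hf1, ← hf2]; linarith

lemma sign_close_eq {u v : ℝ} (hu : u = -1 ∨ u = 0 ∨ u = 1) (hv : v = -1 ∨ v = 0 ∨ v = 1)
    (h : |u - v| < 1) : u = v := by
  rcases hu with hu | hu | hu <;> rcases hv with hv | hv | hv <;>
    subst hu <;> subst hv <;> first | rfl | (exfalso; rw [abs_lt] at h; norm_num at h)

/-- If `f` is detachable at every point of `[a,b]`, then `f '' [a,b]` is countable
(so `f` is a step function there, taking only countably many values). -/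
theorem detachable_on_Icc_image_countable (f : ℝ → ℝ) (a b : ℝ) (hab : a ≤ b)
    (hdet : ∀ x ∈ Set.Icc a b, ∃ L : ℝ, HasDet f x L) :
    (f '' Set.Icc a b).Countable := by
  have hcnt : (⋃ pq : ℚ × ℚ, (detS f pq.1 pq.2 (-1) ∪ detS f pq.1 pq.2 0 ∪
      detS f pq.1 pq.2 1)).Countable := by
    apply Set.countable_iUnion
    intro pq
    exact (((detS_subsingleton f pq.1 pq.2 (-1)).countable.union
      (detS_subsingleton f pq.1 pq.2 0).countable).union
      (detS_subsingleton f pq.1 pq.2 1).countable)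
  refine hcnt.mono ?_
  rintro y ⟨x, hx, rfl⟩
  obtain ⟨L, hL⟩ := hdet x hx
  -- extract eventual constancy of the sign
  have hev2 : ∀ᶠ h in 𝓝[≠] (0:ℝ), dist (Real.sign (f (x + h) - f x)) L < 1/2 :=
    hL (Metric.ball_mem_nhds L (by norm_num))
  obtain ⟨h0, hh0⟩ := hev2.exists
  set c : ℝ := Real.sign (f (x + h0) - f x) with hc
  have hcmem : c = -1 ∨ c = 0 ∨ c = 1 := Real.sign_apply_eq _
  have hev : ∀ᶠ h in 𝓝[≠] (0:ℝ), Real.sign (f (x + h) - f x) = c := by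
    filter_upwards [hev2] with h hh
    apply sign_close_eq (Real.sign_apply_eq _) hcmem
    have : dist (Real.sign (f (x + h) - f x)) c ≤
        dist (Real.sign (f (x + h) - f x)) L + dist L c := dist_triangle _ _ _
    have h2 : dist L c < 1/2 := by rw [dist_comm]; exact hh0
    calc |Real.sign (f (x + h) - f x) - c|
        = dist (Real.sign (f (x + h) - f x)) c := (Real.dist_eq _ _).symm
      _ < 1 := by linarith
  -- turn this into an ε-statement
  rw [eventually_nhdsWithin_iff, Metric.eventually_nhds_iff] at hev
  obtain ⟨ε, hε, hball⟩ := hev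
  obtain ⟨p, hp1, hp2⟩ := exists_rat_btwn (show x - ε < x by linarith)
  obtain ⟨q, hq1, hq2⟩ := exists_rat_btwn (show x < x + ε by linarith)
  have hmem : f x ∈ detS f p q c := by
    refine ⟨x, hp2, hq1, rfl, ?_⟩
    intro z hpz hzq hzx
    have hd : dist (z - x) 0 < ε := by
      rw [Real.dist_eq, sub_zero, abs_lt]
      constructor <;> linarith
    have := hball hd (by
      simp only [Set.mem_compl_iff, Set.mem_singleton_iff, sub_eq_zero]
      exact hzx)
    simpa using this
  refine Set.mem_iUnion.mpr ⟨(p, q), ?_⟩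
  rcases hcmem with h | h | h
  · exact Or.inl (Or.inl (h ▸ hmem))
  · exact Or.inl (Or.inr (h ▸ hmem))
  · exact Or.inr (h ▸ hmem)
end

section
/- If f: ℝ → ℝ is signposted detachable on an open interval (a,b) with signposted detachment identically equal to +1 on (a,b), then f is strictly increasing on (a,b). -/
open Filter Topology Set

lemma pos_of_sign_pos {z : ℝ} (h : 0 < Real.sign z) : 0 < z := by
  rcases lt_trichotomy z 0 with hz | hz | hz
  · rw [Real.sign_of_neg hz] at h; norm_num at h
  · rw [hz, Real.sign_zero] at h; norm_num at h
  · exact hz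

/-- Local property extracted from `HasSignedDet f x 1`. -/
lemma local_of_signedDet {f : ℝ → ℝ} {x : ℝ} (h : HasSignedDet f x 1) :
    ∃ δ > 0, (∀ y, x < y → y < x + δ → f x < f y) ∧
      (∀ y, x - δ < y → y < x → f y < f x) := by
  have hev : ∀ᶠ h' in 𝓝[≠] (0:ℝ), 0 < h' * (f (x + h') - f x) := by
    have := h.eventually (eventually_gt_nhds (by norm_num : (1:ℝ)/2 < 1))
    filter_upwards [this] with h' hh'
    exact pos_of_sign_pos (lt_trans (by norm_num) hh')
  rw [Filter.Eventually, Metric.mem_nhdsWithin_iff] at hev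
  obtain ⟨δ, hδ, hδ'⟩ := hev
  have key : ∀ y : ℝ, y ≠ x → |y - x| < δ → 0 < (y - x) * (f y - f x) := by
    intro y hne hd
    have := hδ' (show y - x ∈ Metric.ball (0:ℝ) δ ∩ {(0:ℝ)}ᶜ from
      ⟨by simpa [Real.dist_eq] using hd, by simp [sub_ne_zero, hne]⟩)
    simpa using this
  refine ⟨δ, hδ, ?_, ?_⟩
  · intro y hxy hyδ
    have h1 := key y hxy.ne' (by rw [abs_of_pos (sub_pos.2 hxy)]; linarith)
    rcases mul_pos_iff.1 h1 with ⟨_, h2⟩ | ⟨h2, _⟩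
    · linarith
    · linarith [sub_pos.2 hxy]
  · intro y hyδ hyx
    have h1 := key y hyx.ne (by rw [abs_of_neg (sub_neg.2 hyx)]; linarith)
    rcases mul_pos_iff.1 h1 with ⟨h2, _⟩ | ⟨_, h2⟩
    · linarith [sub_neg.2 hyx]
    · linarith

/-- If the signposted detachment of `f` is identically `+1` on `(a,b)`,
then `f` is strictly increasing on `(a,b)`. -/
theorem signedDet_one_strictMonoOn (f : ℝ → ℝ) (a b : ℝ)
    (hdet : ∀ x ∈ Set.Ioo a b, HasSignedDet f x 1) :
    StrictMonoOn f (Set.Ioo a b) := by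
  intro x₁ hx₁ x₂ hx₂ h12
  -- everything in [x₁, x₂] is in (a,b)
  have hsub : Set.Icc x₁ x₂ ⊆ Set.Ioo a b := fun t ht =>
    ⟨lt_of_lt_of_le hx₁.1 ht.1, lt_of_le_of_lt ht.2 hx₂.2⟩
  set T : Set ℝ := {y ∈ Set.Icc x₁ x₂ | ∀ t ∈ Set.Ioc x₁ y, f x₁ < f t} with hT
  have hx₁T : x₁ ∈ T := ⟨⟨le_refl _, h12.le⟩, fun t ht => absurd ht.1 (not_lt.2 ht.2)⟩
  have hTne : T.Nonempty := ⟨x₁, hx₁T⟩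
  have hTbdd : BddAbove T := ⟨x₂, fun y hy => hy.1.2⟩
  set s := sSup T with hs
  have hsx₁ : x₁ ≤ s := le_csSup hTbdd hx₁T
  have hsx₂ : s ≤ x₂ := csSup_le hTne fun y hy => hy.1.2
  -- s > x₁
  obtain ⟨δ₁, hδ₁, hR₁, _⟩ := local_of_signedDet (hdet x₁ hx₁)
  have hx₁s : x₁ < s := by
    set y := min (x₁ + δ₁ / 2) x₂ with hy
    have hyx₁ : x₁ < y := lt_min (by linarith) h12
    have hyT : y ∈ T := by
      refine ⟨⟨hyx₁.le, min_le_right _ _⟩, fun t ht => ?_⟩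
      exact hR₁ t ht.1 (lt_of_le_of_lt (ht.2.trans (min_le_left _ _)) (by linarith))
    exact lt_of_lt_of_le hyx₁ (le_csSup hTbdd hyT)
  have hsab : s ∈ Set.Ioo a b := hsub ⟨hsx₁, hsx₂⟩
  obtain ⟨δ, hδ, hR, hL⟩ := local_of_signedDet (hdet s hsab)
  -- s ∈ T
  have hsT : ∀ t ∈ Set.Ioc x₁ s, f x₁ < f t := by
    intro t ht
    rcases eq_or_lt_of_le ht.2 with heq | hts
    · -- t = s : use left property at s
      have hfs : f x₁ < f s := by
        obtain ⟨z, hzT, hzgt⟩ := exists_lt_of_lt_csSup hTne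
          (show max x₁ (s - δ) < s from max_lt hx₁s (by linarith))
        have hzx₁ : x₁ < z := lt_of_le_of_lt (le_max_left _ _) hzgt
        have hz2 : f x₁ < f z := hzT.2 z ⟨hzx₁, le_refl _⟩
        have hzle : z ≤ s := le_csSup hTbdd hzT
        rcases eq_or_lt_of_le hzle with hzs | hzs
        · exact hzs ▸ hz2
        · exact lt_trans hz2 (hL z (lt_of_le_of_lt (le_max_right _ _) hzgt) hzs)
      rw [heq]; exact hfs
    · -- t < s
      obtain ⟨z, hzT, hzgt⟩ := exists_lt_of_lt_csSup hTne hts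
      exact hzT.2 t ⟨ht.1, hzgt.le⟩
  -- s = x₂
  rcases eq_or_lt_of_le hsx₂ with hse | hslt
  · exact hsT x₂ ⟨h12, hse.ge⟩
  · exfalso
    set y := min (s + δ / 2) x₂ with hy
    have hys : s < y := lt_min (by linarith) hslt
    have hyT : y ∈ T := by
      refine ⟨⟨hsx₁.trans hys.le, min_le_right _ _⟩, fun t ht => ?_⟩
      rcases le_or_gt t s with hts | hts
      · exact hsT t ⟨ht.1, hts⟩
      · have hfs : f s < f t :=
          hR t hts (lt_of_le_of_lt (ht.2.trans (min_le_left _ _)) (by linarith))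
        have : f x₁ < f s := hsT s ⟨hx₁s, le_refl _⟩
        linarith
    exact absurd (le_csSup hTbdd hyT) (not_le.2 hys)
end

section
/- If f: ℝ → ℝ is continuous on an open interval (a,b) and signposted detachable at every point of (a,b), then f is strictly monotonous on (a,b) (strictly increasing, strictly decreasing, or constant). -/
open Filter Topology Set

def TriA (f : ℝ → ℝ) (x ε : ℝ) : Prop :=
  ∀ h : ℝ, h ≠ 0 → |h| < ε → (0 < h → f x < f (x + h)) ∧ (h < 0 → f (x + h) < f x)
def TriB (f : ℝ → ℝ) (x ε : ℝ) : Prop :=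
  ∀ h : ℝ, h ≠ 0 → |h| < ε → (0 < h → f (x + h) < f x) ∧ (h < 0 → f x < f (x + h))
def TriC (f : ℝ → ℝ) (x ε : ℝ) : Prop :=
  ∀ h : ℝ, |h| < ε → f (x + h) = f x

lemma tri_of_signedDet {f : ℝ → ℝ} {x L : ℝ} (hL : HasSignedDet f x L) :
    ∃ ε > 0, TriA f x ε ∨ TriB f x ε ∨ TriC f x ε := by
  set g : ℝ → ℝ := fun h => Real.sign (h * (f (x + h) - f x)) with hg
  have hmem : ∀ h : ℝ, g h ∈ ({-1, 0, 1} : Set ℝ) := by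
    intro h
    rcases lt_trichotomy (h * (f (x + h) - f x)) 0 with hc | hc | hc
    · simp [hg, Real.sign_of_neg hc]
    · simp [hg, hc]
    · simp [hg, Real.sign_of_pos hc]
  have hLmem : L ∈ ({-1, 0, 1} : Set ℝ) := by
    have hcl : IsClosed ({-1, 0, 1} : Set ℝ) := (Set.toFinite ({-1,0,1} : Set ℝ)).isClosed
    exact hcl.mem_of_tendsto hL (Filter.Eventually.of_forall hmem)
  have hev : ∀ᶠ h in 𝓝[≠] (0:ℝ), g h = L := by
    have h1 : ∀ᶠ h in 𝓝[≠] (0:ℝ), dist (g h) L < 1 :=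
      hL (Metric.ball_mem_nhds L one_pos)
    filter_upwards [h1] with h hd
    have hm := hmem h
    rcases hm with h1 | h1 | (h1 : g h = 1) <;> rcases hLmem with h2 | h2 | (h2 : L = 1) <;>
      rw [Real.dist_eq] at hd <;> rw [abs_lt] at hd <;> linarith [hd.1, hd.2]
  rw [eventually_iff, Metric.mem_nhdsWithin_iff] at hev
  obtain ⟨ε, hε, hb⟩ := hev
  refine ⟨ε, hε, ?_⟩
  have key : ∀ h : ℝ, h ≠ 0 → |h| < ε → Real.sign (h * (f (x + h) - f x)) = L := by
    intro h hne habs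
    exact hb ⟨by simpa [Real.dist_eq] using habs, hne⟩
  rcases hLmem with h2 | h2 | h2
  · -- L = -1 : TriB
    refine Or.inr (Or.inl ?_)
    intro h hne habs
    have := key h hne habs
    rw [h2] at this
    have hneg : h * (f (x + h) - f x) < 0 := by
      by_contra hc
      push_neg at hc
      rcases hc.eq_or_lt with hc | hc
      · rw [← hc, Real.sign_zero] at this; norm_num at this
      · rw [Real.sign_of_pos hc] at this; norm_num at this
    constructor <;> intro hh <;> nlinarith
  · -- L = 0 : TriC
    refine Or.inr (Or.inr ?_)
    intro h habs
    rcases eq_or_ne h 0 with rfl | hne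
    · simp
    have := key h hne habs
    rw [h2, Real.sign_eq_zero_iff] at this
    have : f (x + h) - f x = 0 := by
      rcases mul_eq_zero.mp this with hc | hc
      · exact absurd hc hne
      · exact hc
    linarith
  · -- L = 1 : TriA
    refine Or.inl ?_
    intro h hne habs
    have := key h hne habs
    rw [h2] at this
    have hpos : 0 < h * (f (x + h) - f x) := by
      by_contra hc
      push_neg at hc
      rcases hc.eq_or_lt with hc | hc
      · rw [hc, Real.sign_zero] at this; norm_num at this
      · rw [Real.sign_of_neg hc] at this; norm_num at this
    constructor <;> intro hh <;> nlinarith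

lemma propagate_right {f : ℝ → ℝ} {a b z t εz : ℝ}
    (hcont : ContinuousOn f (Set.Ioo a b))
    (htri : ∀ x ∈ Set.Ioo a b, ∃ ε > 0, TriA f x ε ∨ TriB f x ε ∨ TriC f x ε)
    (hz : z ∈ Set.Ioo a b) (hεz : 0 < εz) (hC : TriC f z εz)
    (ht : t ∈ Set.Ioo a b) (hzt : z ≤ t) : f t = f z := by
  rcases hzt.eq_or_lt with rfl | hzt
  · rfl
  set S : Set ℝ := {s | s ∈ Set.Icc z t ∧ ∀ u ∈ Set.Icc z s, f u = f z} with hS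
  have hzS : z ∈ S := ⟨⟨le_refl z, hzt.le⟩, fun u hu => by
    have : u = z := le_antisymm hu.2 hu.1
    rw [this]⟩
  have hbdd : BddAbove S := ⟨t, fun s hs => hs.1.2⟩
  set d : ℝ := sSup S with hd
  have hd1 : z ≤ d := le_csSup hbdd hzS
  have hd2 : d ≤ t := csSup_le ⟨z, hzS⟩ fun s hs => hs.1.2
  have hdIoo : d ∈ Set.Ioo a b := ⟨lt_of_lt_of_le hz.1 hd1, lt_of_le_of_lt hd2 ht.2⟩
  have hIco : ∀ u ∈ Set.Ico z d, f u = f z := by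
    intro u hu
    obtain ⟨s, hsS, hus⟩ := exists_lt_of_lt_csSup ⟨z, hzS⟩ hu.2
    exact hsS.2 u ⟨hu.1, hus.le⟩
  have hzd : z < d := by
    by_contra hc
    push_neg at hc
    have hdz : d = z := le_antisymm hc hd1
    set s' : ℝ := min t (z + εz / 2) with hs'
    have hs'S : s' ∈ S := by
      refine ⟨⟨le_min hzt.le (by linarith), min_le_left _ _⟩, ?_⟩
      intro u hu
      have h1 : u - z < εz := by
        have := hu.2.trans (min_le_right _ _); linarith
      have h2 : 0 ≤ u - z := by linarith [hu.1]
      have := hC (u - z) (by rw [abs_of_nonneg h2]; exact h1)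
      simpa using this
    have : s' ≤ d := le_csSup hbdd hs'S
    have hzs' : z < s' := lt_min hzt (by linarith)
    linarith [hdz ▸ this]
  have hfd : f d = f z := by
    have hca : ContinuousAt f d := hcont.continuousAt (Ioo_mem_nhds hdIoo.1 hdIoo.2)
    have h1 : Filter.Tendsto f (𝓝[<] d) (𝓝 (f d)) := hca.tendsto.mono_left nhdsWithin_le_nhds
    have h2 : Filter.Tendsto f (𝓝[<] d) (𝓝 (f z)) := by
      have hmem : Set.Ioo z d ∈ 𝓝[<] d := Ioo_mem_nhdsLT_of_mem ⟨hzd, le_refl d⟩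
      refine Filter.Tendsto.congr' ?_ tendsto_const_nhds
      filter_upwards [hmem] with u hu
      exact (hIco u ⟨hu.1.le, hu.2⟩).symm
    exact tendsto_nhds_unique h1 h2
  have hdt : d = t := by
    by_contra hc
    have hdt : d < t := lt_of_le_of_ne hd2 hc
    obtain ⟨ε, hε, htriD⟩ := htri d hdIoo
    rcases htriD with hA | hB | hC2
    · -- TriA: left side gives f (d+h) < f d for h<0, contradiction
      set h : ℝ := -(min ε (d - z) / 2) with hh
      have hhneg : h < 0 := by
        have : 0 < min ε (d - z) := lt_min hε (by linarith)
        simp only [hh]; linarith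
      have hhabs : |h| < ε := by
        rw [abs_of_neg hhneg]
        have h1 : min ε (d - z) ≤ ε := min_le_left _ _
        simp only [hh]; linarith
      have := (hA h hhneg.ne hhabs).2 hhneg
      have hmem : d + h ∈ Set.Ico z d := by
        constructor
        · have : min ε (d - z) ≤ d - z := min_le_right _ _
          simp only [hh]; linarith
        · simp only [hh]
          have : 0 < min ε (d - z) := lt_min hε (by linarith)
          linarith
      have := hIco _ hmem
      linarith
    · set h : ℝ := -(min ε (d - z) / 2) with hh
      have hhneg : h < 0 := by
        have : 0 < min ε (d - z) := lt_min hε (by linarith)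
        simp only [hh]; linarith
      have hhabs : |h| < ε := by
        rw [abs_of_neg hhneg]
        have h1 : min ε (d - z) ≤ ε := min_le_left _ _
        simp only [hh]; linarith
      have := (hB h hhneg.ne hhabs).2 hhneg
      have hmem : d + h ∈ Set.Ico z d := by
        constructor
        · have : min ε (d - z) ≤ d - z := min_le_right _ _
          simp only [hh]; linarith
        · simp only [hh]
          have : 0 < min ε (d - z) := lt_min hε (by linarith)
          linarith
      have := hIco _ hmem
      linarith
    · -- TriC at d: extend past d, contradiction with sSup
      set s' : ℝ := min t (d + ε / 2) with hs'
      have hs'S : s' ∈ S := by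
        refine ⟨⟨le_min (hd1.trans hdt.le) (by linarith), min_le_left _ _⟩, ?_⟩
        intro u hu
        rcases le_or_gt u d with hud | hud
        · rcases hud.eq_or_lt with rfl | hud
          · exact hfd
          · exact hIco u ⟨hu.1, hud⟩
        · have h1 : u - d < ε := by
            have := hu.2.trans (min_le_right _ _); linarith
          have := hC2 (u - d) (by rw [abs_of_pos (by linarith)]; exact h1)
          simp only [add_sub_cancel] at this
          rw [this, hfd]
      have : s' ≤ d := le_csSup hbdd hs'S
      have : d < s' := lt_min hdt (by linarith)
      linarith
  rw [← hdt]; exact hfd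

lemma exists_triC {f : ℝ → ℝ} {a b x y : ℝ}
    (hcont : ContinuousOn f (Set.Ioo a b))
    (htri : ∀ x ∈ Set.Ioo a b, ∃ ε > 0, TriA f x ε ∨ TriB f x ε ∨ TriC f x ε)
    (hx : x ∈ Set.Ioo a b) (hy : y ∈ Set.Ioo a b) (hxy : x < y) (hfxy : f x = f y) :
    ∃ z ∈ Set.Ioo a b, ∃ ε > 0, TriC f z ε := by
  have hsub : Set.Icc x y ⊆ Set.Ioo a b := fun u hu =>
    ⟨lt_of_lt_of_le hx.1 hu.1, lt_of_le_of_lt hu.2 hy.2⟩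
  by_cases hconst : ∀ w ∈ Set.Icc x y, f w = f x
  · -- constant on Icc x y: midpoint works
    refine ⟨(x + y) / 2, hsub ⟨by linarith, by linarith⟩, (y - x) / 2, by linarith, ?_⟩
    intro h hh
    rw [abs_lt] at hh
    have h1 : (x + y) / 2 + h ∈ Set.Icc x y := ⟨by linarith [hh.1], by linarith [hh.2]⟩
    exact (hconst _ h1).trans (hconst _ ⟨by linarith, by linarith⟩).symm
  · push_neg at hconst
    obtain ⟨w, hw, hfw⟩ := hconst
    have hcompact : IsCompact (Set.Icc x y) := isCompact_Icc
    have hcIcc : ContinuousOn f (Set.Icc x y) := hcont.mono hsub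
    rcases hfw.lt_or_gt with hlt | hlt
    · -- f w < f x : min point
      obtain ⟨z, hzmem, hzmin⟩ := hcompact.exists_isMinOn ⟨x, ⟨le_refl x, hxy.le⟩⟩ hcIcc
      have hfz : f z < f x := lt_of_le_of_lt (hzmin hw) hlt
      have hzx : x < z := by
        rcases hzmem.1.eq_or_lt with rfl | h
        · exact absurd rfl hfz.ne
        · exact h
      have hzy : z < y := by
        rcases hzmem.2.eq_or_lt with rfl | h
        · rw [← hfxy] at hfz; exact absurd rfl hfz.ne
        · exact h
      obtain ⟨ε, hε, hc⟩ := htri z (hsub hzmem)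
      rcases hc with hA | hB | hC
      · exfalso
        set h : ℝ := -(min ε (min (z - x) (y - z)) / 2) with hh
        have hm : 0 < min ε (min (z - x) (y - z)) := lt_min hε (lt_min (by linarith) (by linarith))
        have hneg : h < 0 := by simp only [hh]; linarith
        have habs : |h| < ε := by
          rw [abs_of_neg hneg]
          have := min_le_left ε (min (z - x) (y - z))
          simp only [hh]; linarith
        have := (hA h hneg.ne habs).2 hneg
        have hmem : z + h ∈ Set.Icc x y := by
          have h1 := (min_le_right ε (min (z - x) (y - z))).trans (min_le_left _ _)
          constructor
          · simp only [hh]; linarith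
          · simp only [hh]; linarith
        exact absurd (hzmin hmem) (not_le.mpr this)
      · exfalso
        set h : ℝ := min ε (min (z - x) (y - z)) / 2 with hh
        have hm : 0 < min ε (min (z - x) (y - z)) := lt_min hε (lt_min (by linarith) (by linarith))
        have hpos : 0 < h := by simp only [hh]; linarith
        have habs : |h| < ε := by
          rw [abs_of_pos hpos]
          have := min_le_left ε (min (z - x) (y - z))
          simp only [hh]; linarith
        have := (hB h hpos.ne' habs).1 hpos
        have hmem : z + h ∈ Set.Icc x y := by
          have h1 := (min_le_right ε (min (z - x) (y - z))).trans (min_le_right _ _)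
          constructor
          · simp only [hh]; linarith
          · simp only [hh]; linarith
        exact absurd (hzmin hmem) (not_le.mpr this)
      · exact ⟨z, hsub hzmem, ε, hε, hC⟩
    · -- f x < f w : max point
      obtain ⟨z, hzmem, hzmax⟩ := hcompact.exists_isMaxOn ⟨x, ⟨le_refl x, hxy.le⟩⟩ hcIcc
      have hfz : f x < f z := lt_of_lt_of_le hlt (hzmax hw)
      have hzx : x < z := by
        rcases hzmem.1.eq_or_lt with rfl | h
        · exact absurd rfl hfz.ne
        · exact h
      have hzy : z < y := by
        rcases hzmem.2.eq_or_lt with rfl | h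
        · rw [← hfxy] at hfz; exact absurd rfl hfz.ne'
        · exact h
      obtain ⟨ε, hε, hc⟩ := htri z (hsub hzmem)
      rcases hc with hA | hB | hC
      · exfalso
        set h : ℝ := min ε (min (z - x) (y - z)) / 2 with hh
        have hm : 0 < min ε (min (z - x) (y - z)) := lt_min hε (lt_min (by linarith) (by linarith))
        have hpos : 0 < h := by simp only [hh]; linarith
        have habs : |h| < ε := by
          rw [abs_of_pos hpos]
          have := min_le_left ε (min (z - x) (y - z))
          simp only [hh]; linarith
        have := (hA h hpos.ne' habs).1 hpos
        have hmem : z + h ∈ Set.Icc x y := by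
          have h1 := (min_le_right ε (min (z - x) (y - z))).trans (min_le_right _ _)
          constructor
          · simp only [hh]; linarith
          · simp only [hh]; linarith
        exact absurd (hzmax hmem) (not_le.mpr this)
      · exfalso
        set h : ℝ := -(min ε (min (z - x) (y - z)) / 2) with hh
        have hm : 0 < min ε (min (z - x) (y - z)) := lt_min hε (lt_min (by linarith) (by linarith))
        have hneg : h < 0 := by simp only [hh]; linarith
        have habs : |h| < ε := by
          rw [abs_of_neg hneg]
          have := min_le_left ε (min (z - x) (y - z))
          simp only [hh]; linarith
        have := (hB h hneg.ne habs).2 hneg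
        have hmem : z + h ∈ Set.Icc x y := by
          have h1 := (min_le_right ε (min (z - x) (y - z))).trans (min_le_left _ _)
          constructor
          · simp only [hh]; linarith
          · simp only [hh]; linarith
        exact absurd (hzmax hmem) (not_le.mpr this)
      · exact ⟨z, hsub hzmem, ε, hε, hC⟩

lemma propagate_left {f : ℝ → ℝ} {a b z t εz : ℝ}
    (hcont : ContinuousOn f (Set.Ioo a b))
    (htri : ∀ x ∈ Set.Ioo a b, ∃ ε > 0, TriA f x ε ∨ TriB f x ε ∨ TriC f x ε)
    (hz : z ∈ Set.Ioo a b) (hεz : 0 < εz) (hC : TriC f z εz)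
    (ht : t ∈ Set.Ioo a b) (hzt : t ≤ z) : f t = f z := by
  set g : ℝ → ℝ := fun u => f (-u) with hg
  have hmem : ∀ u : ℝ, u ∈ Set.Ioo (-b) (-a) ↔ -u ∈ Set.Ioo a b := by
    intro u; constructor <;> intro hu <;> constructor <;> linarith [hu.1, hu.2]
  have hgc : ContinuousOn g (Set.Ioo (-b) (-a)) := by
    apply hcont.comp continuousOn_neg
    intro u hu; exact (hmem u).mp hu
  have hgtri : ∀ x ∈ Set.Ioo (-b) (-a), ∃ ε > 0, TriA g x ε ∨ TriB g x ε ∨ TriC g x ε := by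
    intro x hx
    obtain ⟨ε, hε, hc⟩ := htri (-x) ((hmem x).mp hx)
    have hkey : ∀ h : ℝ, g (x + h) = f (-x + -h) := by
      intro h; simp only [hg]; ring_nf
    refine ⟨ε, hε, ?_⟩
    rcases hc with hA | hB | hC
    · refine Or.inr (Or.inl ?_)
      intro h hne habs
      have h1 := hA (-h) (neg_ne_zero.mpr hne) (by rwa [abs_neg])
      rw [hkey]
      constructor
      · intro hh; simpa only [hg, neg_neg] using h1.2 (by linarith)
      · intro hh; simpa only [hg, neg_neg] using h1.1 (by linarith)
    · refine Or.inl ?_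
      intro h hne habs
      have h1 := hB (-h) (neg_ne_zero.mpr hne) (by rwa [abs_neg])
      rw [hkey]
      constructor
      · intro hh; simpa only [hg, neg_neg] using h1.2 (by linarith)
      · intro hh; simpa only [hg, neg_neg] using h1.1 (by linarith)
    · refine Or.inr (Or.inr ?_)
      intro h habs
      have h1 := hC (-h) (by rwa [abs_neg])
      rw [hkey]
      simpa only [hg, neg_neg] using h1
  have hgC : TriC g (-z) εz := by
    intro h habs
    have h1 := hC (-h) (by rwa [abs_neg])
    have : g (-z + h) = f (z + -h) := by simp only [hg]; ring_nf
    rw [this]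
    simpa only [hg, neg_neg] using h1
  have := propagate_right hgc hgtri ((hmem (-z)).mpr (by simpa using hz)) hεz hgC
    ((hmem (-t)).mpr (by simpa using ht)) (by linarith)
  simpa only [hg, neg_neg] using this

/-- If `f` is continuous and signposted detachable on `(a,b)`, then `f` is strictly
increasing, strictly decreasing, or constant on `(a,b)`. -/
theorem continuous_signedDet_strictMono (f : ℝ → ℝ) (a b : ℝ)
    (hcont : ContinuousOn f (Set.Ioo a b))
    (hdet : ∀ x ∈ Set.Ioo a b, ∃ L : ℝ, HasSignedDet f x L) :
    StrictMonoOn f (Set.Ioo a b) ∨ StrictAntiOn f (Set.Ioo a b) ∨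
      (∀ x ∈ Set.Ioo a b, ∀ y ∈ Set.Ioo a b, f x = f y) := by
  by_cases hinj : Set.InjOn f (Set.Ioo a b)
  · by_cases hab : a < b
    · rcases ContinuousOn.strictMonoOn_of_injOn_Ioo hab hcont hinj with h | h
      · exact Or.inl h
      · exact Or.inr (Or.inl h)
    · push_neg at hab
      exact Or.inr (Or.inr (fun x hx => absurd hx (by simp [Set.Ioo_eq_empty_of_le hab])))
  · have htri : ∀ x ∈ Set.Ioo a b, ∃ ε > 0, TriA f x ε ∨ TriB f x ε ∨ TriC f x ε := by
      intro x hx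
      obtain ⟨L, hL⟩ := hdet x hx
      exact tri_of_signedDet hL
    rw [Set.InjOn] at hinj
    push_neg at hinj
    obtain ⟨x, hx, y, hy, hfxy, hne⟩ := hinj
    have hz : ∃ z ∈ Set.Ioo a b, ∃ ε > 0, TriC f z ε := by
      rcases hne.lt_or_gt with hlt | hlt
      · exact exists_triC hcont htri hx hy hlt hfxy
      · exact exists_triC hcont htri hy hx hlt hfxy.symm
    obtain ⟨z, hzmem, εz, hεz, hC⟩ := hz
    refine Or.inr (Or.inr ?_)
    have key : ∀ u ∈ Set.Ioo a b, f u = f z := by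
      intro u hu
      rcases le_total z u with h | h
      · exact propagate_right hcont htri hzmem hεz hC hu h
      · exact propagate_left hcont htri hzmem hεz hC hu h
    intro u hu v hv
    rw [key u hu, key v hv]
end

section
/- Analogue of Rolle's theorem: if f: [a,b] → ℝ is continuous on [a,b], tendable on (a,b), and f(a) = f(b), then there exists c ∈ (a,b) with τ_f(c) = 0. -/
open Filter Topology Set

/-- If f is constant near x, both dets are 0. -/
lemma dets_zero_of_locally_const (f : ℝ → ℝ) (x δ : ℝ) (hδ : 0 < δ)
    (hc : ∀ h : ℝ, |h| < δ → f (x + h) = f x) :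
    HasRightDet f x 0 ∧ HasLeftDet f x 0 := by
  have hev : ∀ᶠ h in 𝓝 (0:ℝ), Real.sign (f (x + h) - f x) = 0 := by
    filter_upwards [Metric.ball_mem_nhds (0:ℝ) hδ] with h hh
    rw [hc h (by simpa [Real.dist_eq] using hh), sub_self, Real.sign_zero]
  have hev' : (fun _ : ℝ => (0:ℝ)) =ᶠ[𝓝 (0:ℝ)] fun h => Real.sign (f (x + h) - f x) :=
    hev.mono fun h hh => hh.symm
  constructor
  · exact Tendsto.congr' (hev'.filter_mono nhdsWithin_le_nhds) tendsto_const_nhds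
  · exact Tendsto.congr' (hev'.filter_mono nhdsWithin_le_nhds) tendsto_const_nhds

lemma aux_max (f : ℝ → ℝ) (a b : ℝ) (hab : a < b)
    (hcont : ContinuousOn f (Set.Icc a b))
    (htend : ∀ x ∈ Set.Ioo a b, ∃ Lp Lm : ℝ, HasRightDet f x Lp ∧ HasLeftDet f x Lm)
    (hfab : f a = f b)
    (hmax : ∃ cM ∈ Set.Icc a b, (∀ x ∈ Set.Icc a b, f x ≤ f cM) ∧ f a < f cM) :
    ∃ c ∈ Set.Ioo a b, ∃ Lp Lm : ℝ,
      HasRightDet f c Lp ∧ HasLeftDet f c Lm ∧ Real.sign (Lp - Lm) = 0 := by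
  obtain ⟨cM, hcM, hM, hMa⟩ := hmax
  set M := f cM with hMdef
  set S : Set ℝ := Set.Icc a b ∩ f ⁻¹' {M} with hS
  have hSclosed : IsClosed S :=
    hcont.preimage_isClosed_of_isClosed isClosed_Icc isClosed_singleton
  have hSne : S.Nonempty := ⟨cM, hcM, rfl⟩
  have hSbdd : BddAbove S := BddAbove.mono Set.inter_subset_left (bddAbove_Icc)
  set c := sSup S with hc
  have hcS : c ∈ S := hSclosed.csSup_mem hSne hSbdd
  have hcIcc : c ∈ Set.Icc a b := hcS.1
  have hfc : f c = M := hcS.2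
  have hca : a < c := by
    rcases eq_or_lt_of_le hcIcc.1 with h | h
    · exact absurd (h ▸ hfc) (by intro hh; exact absurd hh.symm.le (not_le.mpr hMa))
    · exact h
  have hcb : c < b := by
    rcases eq_or_lt_of_le hcIcc.2 with h | h
    · exfalso; rw [h] at hfc; rw [← hfab] at hfc; exact absurd hfc.symm.le (not_le.mpr hMa)
    · exact h
  have hcIoo : c ∈ Set.Ioo a b := ⟨hca, hcb⟩
  obtain ⟨Lp, Lm, hLp, hLm⟩ := htend c hcIoo
  -- Right side: strictly below M
  have hright : ∀ h : ℝ, h ∈ Set.Ioo (0:ℝ) (b - c) →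
      Real.sign (f (c + h) - f c) = -1 := by
    intro h hh
    have hmem : c + h ∈ Set.Icc a b :=
      ⟨by linarith [hcIcc.1, hh.1], by linarith [hh.2]⟩
    have hle : f (c + h) ≤ M := hM _ hmem
    have hne : f (c + h) ≠ M := by
      intro he
      have : c + h ∈ S := ⟨hmem, he⟩
      have := le_csSup hSbdd this
      linarith [hh.1]
    rw [hfc]
    exact Real.sign_of_neg (by cases lt_or_eq_of_le hle with
      | inl h' => linarith
      | inr h' => exact absurd h' hne)
  have hLp1 : Lp = -1 := by
    have h1 : Filter.Tendsto (fun h : ℝ => Real.sign (f (c + h) - f c)) (𝓝[>] (0:ℝ)) (𝓝 (-1)) := by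
      apply Tendsto.congr' _ tendsto_const_nhds
      filter_upwards [Ioo_mem_nhdsGT_of_mem (show (0:ℝ) ∈ Set.Ico (0:ℝ) (b - c) from ⟨le_refl _, by linarith⟩)] with h hh
      exact (hright h hh).symm
    exact tendsto_nhds_unique hLp h1
  -- Left side: sign is in {-1, 0}
  have hleft : ∀ h : ℝ, h ∈ Set.Ioo (a - c) (0:ℝ) →
      Real.sign (f (c + h) - f c) ∈ ({-1, 0} : Set ℝ) := by
    intro h hh
    have hmem : c + h ∈ Set.Icc a b := ⟨by linarith [hh.1], by linarith [hcIcc.2, hh.2]⟩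
    have hle : f (c + h) ≤ M := hM _ hmem
    rw [hfc]
    simp only [Set.mem_insert_iff, Set.mem_singleton_iff]
    rcases lt_or_eq_of_le hle with h' | h'
    · left; exact Real.sign_of_neg (by linarith)
    · right; rw [h', sub_self, Real.sign_zero]
  have hmemIoo : Set.Ioo (a - c) (0:ℝ) ∈ 𝓝[<] (0:ℝ) :=
    Ioo_mem_nhdsLT_of_mem (show (0:ℝ) ∈ Set.Ioc (a - c) (0:ℝ) from ⟨by linarith, le_refl _⟩)
  have hLm01 : Lm ∈ ({-1, 0} : Set ℝ) := by
    refine ((Set.finite_singleton (0:ℝ)).insert (-1)).isClosed.mem_of_tendsto hLm ?_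
    filter_upwards [hmemIoo] with h hh using hleft h hh
  rw [Set.mem_insert_iff, Set.mem_singleton_iff] at hLm01
  rcases hLm01 with hLm1 | hLm0
  · exact ⟨c, hcIoo, Lp, Lm, hLp, hLm, by rw [hLp1, hLm1, sub_self, Real.sign_zero]⟩
  -- Lm = 0 : f is constant = M on a left neighborhood of c
  · rw [hLm0] at hLm
    have hev : ∀ᶠ h in 𝓝[<] (0:ℝ), Real.sign (f (c + h) - f c) = 0 := by
      have h1 : ∀ᶠ h in 𝓝[<] (0:ℝ), Real.sign (f (c + h) - f c) > -1/2 := by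
        exact hLm.eventually (eventually_gt_nhds (by norm_num : (-1/2 : ℝ) < 0))
      filter_upwards [h1, hmemIoo] with h hh1 hh2
      rcases hleft h hh2 with h' | h'
      · rw [h'] at hh1; norm_num at hh1
      · exact h'
    rw [eventually_iff, mem_nhdsWithin] at hev
    obtain ⟨u, hu, hu0, husub⟩ := hev
    obtain ⟨δ, hδ, hball⟩ := Metric.isOpen_iff.mp hu 0 hu0
    set δ' := min δ (c - a) with hδ'
    have hδ'pos : 0 < δ' := lt_min hδ (by linarith)
    set x := c - δ' / 2 with hx
    have hxIoo : x ∈ Set.Ioo a b := by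
      have h1 : δ' ≤ c - a := min_le_right _ _
      constructor
      · simp only [hx]; linarith
      · simp only [hx]; linarith
    have hconst : ∀ y : ℝ, y ∈ Set.Ioo (c - δ') c → f y = M := by
      intro y hy
      have hyball : (y - c) ∈ u := by
        apply hball
        have h1 : |y - c| < δ := by
          rw [abs_sub_comm, abs_of_pos (by linarith [hy.2] : (0:ℝ) < c - y)]
          have hd : δ' ≤ δ := min_le_left _ _
          linarith [hy.1]
        simpa [Real.dist_eq, Metric.mem_ball] using h1
      have h0 : Real.sign (f (c + (y - c)) - f c) = 0 :=
        husub ⟨hyball, sub_neg.mpr hy.2⟩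
      simp only [add_sub_cancel] at h0
      rw [Real.sign_eq_zero_iff, hfc] at h0
      linarith
    have hloc : ∀ h : ℝ, |h| < δ' / 4 → f (x + h) = f x := by
      intro h hh
      rw [abs_lt] at hh
      have hxM : f x = M := hconst x ⟨by simp only [hx]; linarith, by simp only [hx]; linarith⟩
      rw [hxM]
      exact hconst (x + h) ⟨by simp only [hx]; linarith, by simp only [hx]; linarith⟩
    obtain ⟨hr, hl⟩ := dets_zero_of_locally_const f x (δ' / 4) (by linarith) hloc
    exact ⟨x, hxIoo, 0, 0, hr, hl, by rw [sub_self, Real.sign_zero]⟩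

lemma hasRightDet_neg {f : ℝ → ℝ} {x L : ℝ} (h : HasRightDet (fun y => -f y) x L) :
    HasRightDet f x (-L) := by
  have : Tendsto (fun h : ℝ => -Real.sign (f (x + h) - f x)) (𝓝[>] (0:ℝ)) (𝓝 L) := by
    apply h.congr
    intro h
    rw [show -f (x + h) - -f x = -(f (x + h) - f x) by ring, Real.sign_neg]
  simpa [HasRightDet] using this.neg

lemma hasLeftDet_neg {f : ℝ → ℝ} {x L : ℝ} (h : HasLeftDet (fun y => -f y) x L) :
    HasLeftDet f x (-L) := by
  have : Tendsto (fun h : ℝ => -Real.sign (f (x + h) - f x)) (𝓝[<] (0:ℝ)) (𝓝 L) := by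
    apply h.congr
    intro h
    rw [show -f (x + h) - -f x = -(f (x + h) - f x) by ring, Real.sign_neg]
  simpa [HasLeftDet] using this.neg

/-- Analogue of Rolle's theorem: if `f` is continuous on `[a,b]`, tendable on `(a,b)`,
and `f a = f b`, then at some `c ∈ (a,b)` the tendency of `f` vanishes. -/
theorem rolle_tendency (f : ℝ → ℝ) (a b : ℝ) (hab : a < b)
    (hcont : ContinuousOn f (Set.Icc a b))
    (htend : ∀ x ∈ Set.Ioo a b, ∃ Lp Lm : ℝ, HasRightDet f x Lp ∧ HasLeftDet f x Lm)
    (hfab : f a = f b) :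
    ∃ c ∈ Set.Ioo a b, ∃ Lp Lm : ℝ,
      HasRightDet f c Lp ∧ HasLeftDet f c Lm ∧ Real.sign (Lp - Lm) = 0 := by
  have hne : (Set.Icc a b).Nonempty := Set.nonempty_Icc.mpr hab.le
  obtain ⟨cM, hcM, hcMmax⟩ := isCompact_Icc.exists_isMaxOn hne hcont
  obtain ⟨cm, hcm, hcmmin⟩ := isCompact_Icc.exists_isMinOn hne hcont
  have haI : a ∈ Set.Icc a b := ⟨le_refl _, hab.le⟩
  rcases lt_or_ge (f a) (f cM) with hmax | hmax1
  · exact aux_max f a b hab hcont htend hfab ⟨cM, hcM, fun x hx => hcMmax hx, hmax⟩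
  rcases lt_or_ge (f cm) (f a) with hmin | hmin1
  · -- apply aux_max to -f
    have hcont' : ContinuousOn (fun y => -f y) (Set.Icc a b) := hcont.neg
    have htend' : ∀ x ∈ Set.Ioo a b, ∃ Lp Lm : ℝ,
        HasRightDet (fun y => -f y) x Lp ∧ HasLeftDet (fun y => -f y) x Lm := by
      intro x hx
      obtain ⟨Lp, Lm, hp, hm⟩ := htend x hx
      refine ⟨-Lp, -Lm, ?_, ?_⟩
      · have : Tendsto (fun h : ℝ => -Real.sign (f (x + h) - f x)) (𝓝[>] (0:ℝ)) (𝓝 (-Lp)) :=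
          hp.neg
        apply this.congr
        intro h
        rw [show (fun y => -f y) (x + h) - -f x = -(f (x + h) - f x) by ring, Real.sign_neg]
      · have : Tendsto (fun h : ℝ => -Real.sign (f (x + h) - f x)) (𝓝[<] (0:ℝ)) (𝓝 (-Lm)) :=
          hm.neg
        apply this.congr
        intro h
        rw [show (fun y => -f y) (x + h) - -f x = -(f (x + h) - f x) by ring, Real.sign_neg]
    obtain ⟨c, hcIoo, Lp, Lm, hp, hm, hs⟩ :=
      aux_max (fun y => -f y) a b hab hcont' htend' (by simp [hfab])
        ⟨cm, hcm, fun x hx => neg_le_neg (hcmmin hx), by simpa using hmin⟩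
    refine ⟨c, hcIoo, -Lp, -Lm, hasRightDet_neg hp, hasLeftDet_neg hm, ?_⟩
    rw [show -Lp - -Lm = -(Lp - Lm) by ring, Real.sign_neg, hs, neg_zero]
  · -- constant case
    have hconst : ∀ x ∈ Set.Icc a b, f x = f a := fun x hx =>
      le_antisymm (le_trans (hcMmax hx) hmax1) (le_trans hmin1 (hcmmin hx))
    set x := (a + b) / 2 with hx
    have hxIoo : x ∈ Set.Ioo a b := ⟨by simp only [hx]; linarith, by simp only [hx]; linarith⟩
    have hloc : ∀ h : ℝ, |h| < (b - a) / 2 → f (x + h) = f x := by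
      intro h hh
      rw [abs_lt] at hh
      rw [hconst x ⟨by simp only [hx]; linarith, by simp only [hx]; linarith⟩,
        hconst (x + h) ⟨by simp only [hx]; linarith, by simp only [hx]; linarith⟩]
    obtain ⟨hr, hl⟩ := dets_zero_of_locally_const f x ((b - a) / 2) (by linarith) hloc
    exact ⟨x, hxIoo, 0, 0, hr, hl, by rw [sub_self, Real.sign_zero]⟩
end

section
/- Analogue of Lagrange's mean value theorem: if f: [a,b] → ℝ is continuous on [a,b], tendable on (a,b), and f(a) < f(b), then for every value v with f(a) < v < f(b) there exists a point c ∈ (a,b) with f(c) = v, f^;_+(c) = +1, and f^;_−(c) ≠ +1; in particular τ_f(c) = +1 = sgn(f(b) − f(a)). -/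
open Filter Topology Set

/-- Analogue of Lagrange's mean value theorem: if `f` is continuous on `[a,b]`,
tendable on `(a,b)`, and `f a < f b`, then for every `v ∈ (f a, f b)` there exists
`c ∈ (a,b)` with `f c = v`, right detachment `+1`, left detachment `≠ +1`, and
hence tendency `+1 = sgn (f b - f a)`. -/
theorem lagrange_tendency (f : ℝ → ℝ) (a b v : ℝ) (hab : a < b)
    (hcont : ContinuousOn f (Set.Icc a b))
    (htend : ∀ x ∈ Set.Ioo a b, ∃ Lp Lm : ℝ, HasRightDet f x Lp ∧ HasLeftDet f x Lm)
    (hfab : f a < f b) (hv : v ∈ Set.Ioo (f a) (f b)) :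
    ∃ c ∈ Set.Ioo a b, f c = v ∧ HasRightDet f c 1 ∧
      ∃ Lm : ℝ, HasLeftDet f c Lm ∧ (Lm = -1 ∨ Lm = 0) ∧
        Real.sign (1 - Lm) = 1 ∧ Real.sign (1 - Lm) = Real.sign (f b - f a) := by
  obtain ⟨hva, hvb⟩ := hv
  set T : Set ℝ := {x | x ∈ Set.Icc a b ∧ ∀ y ∈ Set.Icc a x, f y ≤ v} with hTdef
  have haT : a ∈ T := by
    refine ⟨⟨le_refl a, hab.le⟩, fun y hy => ?_⟩
    have : y = a := le_antisymm hy.2 hy.1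
    simpa [this] using hva.le
  have hbdd : BddAbove T := ⟨b, fun x hx => hx.1.2⟩
  set c := sSup T with hcdef
  have hac : a ≤ c := le_csSup hbdd haT
  have hcb : c ≤ b := csSup_le ⟨a, haT⟩ (fun x hx => hx.1.2)
  have hle : ∀ y ∈ Set.Ico a c, f y ≤ v := by
    intro y hy
    obtain ⟨t, htT, hyt⟩ := exists_lt_of_lt_csSup ⟨a, haT⟩ hy.2
    exact htT.2 y ⟨hy.1, hyt.le⟩
  have hfc_le : f c ≤ v := by
    rcases eq_or_lt_of_le hac with h | h
    · simpa [← h] using hva.le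
    · have hclos : c ∈ closure (Set.Ico a c) := by
        rw [closure_Ico h.ne]; exact ⟨hac, le_refl c⟩
      have hne : (𝓝[Set.Ico a c] c).NeBot :=
        mem_closure_iff_nhdsWithin_neBot.1 hclos
      have htends : Filter.Tendsto f (𝓝[Set.Ico a c] c) (𝓝 (f c)) :=
        (hcont c ⟨hac, hcb⟩).mono (fun x hx => ⟨hx.1, hx.2.le.trans hcb⟩)
      refine le_of_tendsto htends ?_
      filter_upwards [eventually_mem_nhdsWithin] with x hx using hle x hx
  have hfc : f c = v := by
    by_contra hne
    have hfc_lt : f c < v := lt_of_le_of_ne hfc_le hne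
    have hcb' : c < b := lt_of_le_of_ne hcb (fun h => by rw [h] at hfc_lt; exact absurd hvb (not_lt.2 hfc_lt.le))
    have hev : ∀ᶠ x in 𝓝[Set.Icc a b] c, f x < v :=
      (hcont c ⟨hac, hcb⟩).eventually_lt_const hfc_lt
    rw [eventually_nhdsWithin_iff] at hev
    obtain ⟨δ, hδpos, hδ⟩ := Metric.eventually_nhds_iff.1 hev
    set t := min b (c + δ / 2) with htdef
    have hct : c < t := lt_min hcb' (by linarith)
    have htT : t ∈ T := by
      refine ⟨⟨hac.trans hct.le, min_le_left _ _⟩, fun y hy => ?_⟩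
      rcases le_or_gt y c with h | h
      · rcases lt_or_eq_of_le h with h' | h'
        · exact hle y ⟨hy.1, h'⟩
        · rw [h']; exact hfc_le
      · have hyt : y ≤ t := hy.2
        have h1 : y ≤ c + δ / 2 := hyt.trans (min_le_right _ _)
        have h2 : dist y c < δ := by
          rw [Real.dist_eq, abs_of_pos (by linarith)]; linarith
        exact (hδ h2 ⟨hy.1, hyt.trans (min_le_left _ _)⟩).le
    exact absurd (le_csSup hbdd htT) (not_le.2 hct)
  have hca : a < c := lt_of_le_of_ne hac (fun h => by rw [← h] at hfc; exact absurd hfc (ne_of_lt hva))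
  have hcb' : c < b := lt_of_le_of_ne hcb (fun h => by rw [h] at hfc; exact absurd hfc (ne_of_gt hvb))
  obtain ⟨Lp, Lm, hRp, hLm⟩ := htend c ⟨hca, hcb'⟩
  have hle' : ∀ y ∈ Set.Icc a c, f y ≤ v := by
    intro y hy
    rcases lt_or_eq_of_le hy.2 with h | h
    · exact hle y ⟨hy.1, h⟩
    · rw [h, hfc]
  -- Right detachment equals 1
  have hfreq : ∃ᶠ h in 𝓝[>] (0:ℝ), Real.sign (f (c + h) - f c) = 1 := by
    rw [Filter.frequently_iff]
    intro U hU
    obtain ⟨u, hu, hsub⟩ := mem_nhdsGT_iff_exists_Ioo_subset.1 hU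
    have hu0 : (0:ℝ) < u := hu
    set w := min b (c + u / 2) with hwdef
    have hcw : c < w := lt_min hcb' (by linarith)
    have hwT : w ∉ T := fun h => absurd (le_csSup hbdd h) (not_le.2 hcw)
    have : ¬ ∀ y ∈ Set.Icc a w, f y ≤ v := fun h =>
      hwT ⟨⟨hac.trans hcw.le, min_le_left _ _⟩, h⟩
    push_neg at this
    obtain ⟨y, hy, hyv⟩ := this
    have hyc : c < y := by
      by_contra h
      exact absurd (hle' y ⟨hy.1, not_lt.1 h⟩) (not_le.2 hyv)
    refine ⟨y - c, hsub ⟨by linarith, ?_⟩, ?_⟩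
    · have : y ≤ c + u / 2 := hy.2.trans (min_le_right _ _)
      linarith
    · have : 0 < f (c + (y - c)) - f c := by
        rw [show c + (y - c) = y by ring, hfc]; linarith
      exact Real.sign_of_pos this
  have hLp1 : Lp = 1 := by
    refine tendsto_nhds_unique_of_frequently_eq hRp tendsto_const_nhds ?_
    exact hfreq
  -- Left detachment is in {-1, 0}
  have hmem : Lm ∈ ({-1, 0} : Set ℝ) := by
    have hclosed : IsClosed ({-1, 0} : Set ℝ) :=
      (Set.toFinite _).isClosed
    refine hclosed.mem_of_tendsto hLm ?_
    have hmemIoo : Set.Ioo (a - c) 0 ∈ 𝓝[<] (0:ℝ) :=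
      Ioo_mem_nhdsLT_of_mem ⟨by linarith, le_refl _⟩
    filter_upwards [hmemIoo] with h hh
    have hch : c + h ∈ Set.Icc a c := ⟨by linarith [hh.1], by linarith [hh.2]⟩
    have : f (c + h) - f c ≤ 0 := by
      have := hle' (c + h) hch
      rw [hfc]; linarith
    rcases lt_or_eq_of_le this with h' | h'
    · left; exact Real.sign_of_neg h'
    · simp [h', Real.sign_zero]
  have hLmcases : Lm = -1 ∨ Lm = 0 := by simpa using hmem
  refine ⟨c, ⟨hca, hcb'⟩, hfc, hLp1 ▸ hRp, Lm, hLm, hLmcases, ?_, ?_⟩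
  · rcases hLmcases with h | h <;> rw [h] <;>
      [exact Real.sign_of_pos (by norm_num); exact Real.sign_of_pos (by norm_num)]
  · rcases hLmcases with h | h <;> rw [h, Real.sign_of_pos (sub_pos.2 hfab)] <;>
      exact Real.sign_of_pos (by norm_num)
end

section
/- If f: ℝ → ℝ is differentiable at x₀ with f'(x₀) ≠ 0, then f is signposted detachable at x₀ (and not detachable there), and its signposted detachment and tendency at x₀ both equal sgn(f'(x₀)). -/
open Filter Topology Set

lemma myslope (f : ℝ → ℝ) (x₀ L : ℝ) (hd : HasDerivAt f L x₀) :
    Tendsto (fun h : ℝ => (f (x₀ + h) - f x₀) / h) (𝓝[≠] (0:ℝ)) (𝓝 L) := by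
  have h1 := hasDerivAt_iff_tendsto_slope.mp hd
  have hm : Tendsto (fun h : ℝ => x₀ + h) (𝓝[≠] (0:ℝ)) (𝓝[≠] x₀) := by
    have hc : ContinuousWithinAt (fun h : ℝ => x₀ + h) {(0:ℝ)}ᶜ 0 :=
      (continuous_add_left x₀).continuousWithinAt
    have := hc.tendsto_nhdsWithin (t := {x₀}ᶜ) (fun h hh => by simpa using hh)
    simpa using this
  have := h1.comp hm
  refine this.congr fun h => ?_
  simp [Function.comp, slope_def_field]

lemma key (f : ℝ → ℝ) (x₀ L : ℝ) (hd : HasDerivAt f L x₀) (hL : L ≠ 0) :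
    ∀ᶠ h in 𝓝[≠] (0:ℝ),
      Real.sign (f (x₀ + h) - f x₀) = Real.sign h * Real.sign L ∧
      Real.sign (h * (f (x₀ + h) - f x₀)) = Real.sign L := by
  have hs := myslope f x₀ L hd
  have hne : ∀ᶠ h in 𝓝[≠] (0:ℝ), h ≠ (0:ℝ) := self_mem_nhdsWithin
  rcases hL.lt_or_gt with hneg | hpos
  · have hev : ∀ᶠ h in 𝓝[≠] (0:ℝ), (f (x₀ + h) - f x₀) / h < 0 :=
      hs.eventually (eventually_lt_nhds hneg)
    filter_upwards [hne, hev] with h hh hq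
    have hΔ : f (x₀ + h) - f x₀ = h * ((f (x₀ + h) - f x₀) / h) := by
      field_simp
    rw [Real.sign_of_neg hneg]
    rcases hh.lt_or_gt with h0 | h0
    · have h1 : (0:ℝ) < f (x₀ + h) - f x₀ := by
        rw [hΔ]; exact mul_pos_of_neg_of_neg h0 hq
      have h2 : h * (f (x₀ + h) - f x₀) < 0 := mul_neg_of_neg_of_pos h0 h1
      rw [Real.sign_of_pos h1, Real.sign_of_neg h0, Real.sign_of_neg h2]
      norm_num
    · have h1 : f (x₀ + h) - f x₀ < 0 := by
        rw [hΔ]; exact mul_neg_of_pos_of_neg h0 hq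
      have h2 : h * (f (x₀ + h) - f x₀) < 0 := mul_neg_of_pos_of_neg h0 h1
      rw [Real.sign_of_neg h1, Real.sign_of_pos h0, Real.sign_of_neg h2]
      norm_num
  · have hev : ∀ᶠ h in 𝓝[≠] (0:ℝ), 0 < (f (x₀ + h) - f x₀) / h :=
      hs.eventually (eventually_gt_nhds hpos)
    filter_upwards [hne, hev] with h hh hq
    have hΔ : f (x₀ + h) - f x₀ = h * ((f (x₀ + h) - f x₀) / h) := by
      field_simp
    rw [Real.sign_of_pos hpos]
    rcases hh.lt_or_gt with h0 | h0
    · have h1 : f (x₀ + h) - f x₀ < 0 := by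
        rw [hΔ]; exact mul_neg_of_neg_of_pos h0 hq
      have h2 : 0 < h * (f (x₀ + h) - f x₀) := mul_pos_of_neg_of_neg h0 h1
      rw [Real.sign_of_neg h1, Real.sign_of_neg h0, Real.sign_of_pos h2]
      norm_num
    · have h1 : (0:ℝ) < f (x₀ + h) - f x₀ := by
        rw [hΔ]; exact mul_pos h0 hq
      have h2 : 0 < h * (f (x₀ + h) - f x₀) := mul_pos h0 h1
      rw [Real.sign_of_pos h1, Real.sign_of_pos h0, Real.sign_of_pos h2]
      norm_num

/-- If `f` is differentiable at `x₀` with `f'(x₀) = L ≠ 0`, then `f` is signposted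
detachable at `x₀` (with signposted detachment and tendency `sgn L`) and not
detachable there. -/
theorem deriv_ne_zero_signedDetachable (f : ℝ → ℝ) (x₀ L : ℝ)
    (hd : HasDerivAt f L x₀) (hL : L ≠ 0) :
    HasRightDet f x₀ (Real.sign L) ∧ HasLeftDet f x₀ (-(Real.sign L)) ∧
      HasSignedDet f x₀ (Real.sign L) ∧
      Real.sign (Real.sign L - (-(Real.sign L))) = Real.sign L ∧
      ¬ ∃ M : ℝ, HasDet f x₀ M := by
  have hkey := key f x₀ L hd hL
  have hmonoR : 𝓝[>] (0:ℝ) ≤ 𝓝[≠] (0:ℝ) :=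
    nhdsWithin_mono _ (fun x hx => ne_of_gt hx)
  have hmonoL : 𝓝[<] (0:ℝ) ≤ 𝓝[≠] (0:ℝ) :=
    nhdsWithin_mono _ (fun x hx => ne_of_lt hx)
  have hR : HasRightDet f x₀ (Real.sign L) := by
    have hev : ∀ᶠ h in 𝓝[>] (0:ℝ), Real.sign (f (x₀ + h) - f x₀) = Real.sign L := by
      filter_upwards [hkey.filter_mono hmonoR, self_mem_nhdsWithin] with h hh hpos
      rw [hh.1, Real.sign_of_pos hpos, one_mul]
    exact tendsto_const_nhds.congr' (hev.mono fun h e => e.symm)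
  have hLe : HasLeftDet f x₀ (-(Real.sign L)) := by
    have hev : ∀ᶠ h in 𝓝[<] (0:ℝ), Real.sign (f (x₀ + h) - f x₀) = -(Real.sign L) := by
      filter_upwards [hkey.filter_mono hmonoL, self_mem_nhdsWithin] with h hh hneg
      rw [hh.1, Real.sign_of_neg hneg, neg_one_mul]
    exact tendsto_const_nhds.congr' (hev.mono fun h e => e.symm)
  have hS : HasSignedDet f x₀ (Real.sign L) :=
    tendsto_const_nhds.congr' (hkey.mono fun h e => e.2.symm)
  refine ⟨hR, hLe, hS, ?_, ?_⟩
  · rcases hL.lt_or_gt with hneg | hpos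
    · rw [Real.sign_of_neg hneg]
      have : (-1 : ℝ) - -(-1) = -2 := by norm_num
      rw [this, Real.sign_of_neg] <;> norm_num
    · rw [Real.sign_of_pos hpos]
      have : (1 : ℝ) - -1 = 2 := by norm_num
      rw [this, Real.sign_of_pos] <;> norm_num
  · rintro ⟨M, hM⟩
    have e1 : M = Real.sign L := tendsto_nhds_unique (hM.mono_left hmonoR) hR
    have e2 : M = -(Real.sign L) := tendsto_nhds_unique (hM.mono_left hmonoL) hLe
    have : Real.sign L = 0 := by linarith [e1, e2]
    exact hL (Real.sign_eq_zero_iff.mp this)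
end

section
/- If a detachable function f: ℝ → ℝ is even, then its detachment f^; is even; if f is odd and detachable, then f^; is odd. -/
open Filter Topology Set

lemma neg_tendsto_punct : Tendsto (fun h : ℝ => -h) (𝓝[≠] (0:ℝ)) (𝓝[≠] (0:ℝ)) := by
  apply tendsto_nhdsWithin_of_tendsto_nhds_of_eventually_within
  · simpa using ((tendsto_neg (0:ℝ)).mono_left (nhdsWithin_le_nhds (s := {(0:ℝ)}ᶜ)))
  · filter_upwards [self_mem_nhdsWithin] with h hh
    simp only [mem_compl_iff, mem_singleton_iff] at hh ⊢
    simpa using hh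

/-- If a detachable function is even, its detachment is even; if it is odd,
its detachment is odd. -/
theorem det_even_odd (f g : ℝ → ℝ) (hdet : ∀ x : ℝ, HasDet f x (g x)) :
    ((∀ x : ℝ, f (-x) = f x) → ∀ x : ℝ, g (-x) = g x) ∧
    ((∀ x : ℝ, f (-x) = -f x) → ∀ x : ℝ, g (-x) = -g x) := by
  have key : ∀ x : ℝ, Tendsto (fun h : ℝ => Real.sign (f (x + -h) - f x)) (𝓝[≠] (0:ℝ))
      (𝓝 (g x)) := fun x => (hdet x).comp neg_tendsto_punct
  constructor
  · intro he x
    have h1 : (fun h : ℝ => Real.sign (f (-x + h) - f (-x)))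
        = fun h : ℝ => Real.sign (f (x + -h) - f x) := by
      funext h
      rw [show -x + h = -(x + -h) by ring, he, he]
    have h2 := hdet (-x)
    rw [HasDet, h1] at h2
    exact tendsto_nhds_unique h2 (key x)
  · intro ho x
    have h1 : (fun h : ℝ => Real.sign (f (-x + h) - f (-x)))
        = fun h : ℝ => - Real.sign (f (x + -h) - f x) := by
      funext h
      rw [show -x + h = -(x + -h) by ring, ho, ho,
        show -f (x + -h) - -f x = -(f (x + -h) - f x) by ring, Real.sign_neg]
    have h2 := hdet (-x)
    rw [HasDet, h1] at h2
    exact tendsto_nhds_unique h2 ((key x).neg)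
end

section
/- There exists a function f: [0,1] → ℝ that is differentiable almost everywhere but tendable at no point; concretely, f(x) = 1/n³ if x = m/n with m, n coprime positive integers, and f(x) = 0 if x is irrational, is differentiable (with derivative 0) at almost every irrational point, yet f is not tendable at any irrational point and not signposted detachable anywhere. -/
open Filter Topology Set

open Classical in
noncomputable def badF (x : ℝ) : ℝ :=
  if h : ∃ q : ℚ, (q : ℝ) = x then 1 / ((h.choose.den : ℝ)) ^ 3 else 0

lemma badF_irrational {x : ℝ} (hx : Irrational x) : badF x = 0 := by
  unfold badF
  rw [dif_neg]
  rintro ⟨q, rfl⟩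
  exact Rat.not_irrational q hx

lemma badF_rat (q : ℚ) : badF (q : ℝ) = 1 / ((q.den : ℝ)) ^ 3 := by
  have h : ∃ p : ℚ, (p : ℝ) = ((q : ℝ)) := ⟨q, rfl⟩
  unfold badF
  rw [dif_pos h, Rat.cast_injective h.choose_spec]

lemma badF_rat_pos (q : ℚ) : 0 < badF (q : ℝ) := by
  rw [badF_rat]
  have : (0:ℝ) < q.den := by exact_mod_cast q.den_pos
  positivity

lemma neBot_aux (T : Set ℝ) (hT : ∀ ε > 0, ∃ b ∈ T, |b| < ε) :
    (𝓝[T] (0:ℝ)).NeBot := by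
  rw [← mem_closure_iff_nhdsWithin_neBot, Metric.mem_closure_iff]
  intro ε hε
  obtain ⟨b, hb, h⟩ := hT ε hε
  exact ⟨b, hb, by rwa [Real.dist_eq, zero_sub, abs_neg]⟩

lemma sign_on_rat {x : ℝ} (hx : Irrational x) {h : ℝ} (hh : ∃ q : ℚ, (q:ℝ) = x + h) :
    Real.sign (badF (x + h) - badF x) = 1 := by
  obtain ⟨q, hq⟩ := hh
  rw [badF_irrational hx, sub_zero, ← hq]
  exact Real.sign_of_pos (badF_rat_pos q)

lemma sign_on_irr {x : ℝ} (hx : Irrational x) {h : ℝ} (hh : Irrational (x + h)) :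
    Real.sign (badF (x + h) - badF x) = 0 := by
  rw [badF_irrational hx, badF_irrational hh, sub_zero, Real.sign_zero]

lemma not_rightDet {x : ℝ} (hx : Irrational x) : ¬ ∃ L, HasRightDet badF x L := by
  rintro ⟨L, hL⟩
  set T1 : Set ℝ := {h | 0 < h ∧ ∃ q : ℚ, (q:ℝ) = x + h} with hT1def
  set T2 : Set ℝ := {h | 0 < h ∧ Irrational (x + h)} with hT2def
  haveI n1 : (𝓝[T1] (0:ℝ)).NeBot := neBot_aux T1 (by
    intro ε hε
    obtain ⟨q, hq1, hq2⟩ := exists_rat_btwn (show x < x + ε by linarith)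
    exact ⟨(q:ℝ) - x, ⟨by linarith, q, by ring⟩, by
      rw [abs_of_pos (by linarith)]; linarith⟩)
  haveI n2 : (𝓝[T2] (0:ℝ)).NeBot := neBot_aux T2 (by
    intro ε hε
    obtain ⟨q, hq1, hq2⟩ := exists_rat_btwn (show (0:ℝ) < ε from hε)
    exact ⟨(q:ℝ), ⟨hq1, hx.add_ratCast q⟩, by rw [abs_of_pos hq1]; exact hq2⟩)
  have l1 : Tendsto (fun h : ℝ => Real.sign (badF (x + h) - badF x)) (𝓝[T1] 0) (𝓝 L) :=
    hL.mono_left (nhdsWithin_mono _ fun h hh => hh.1)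
  have l2 : Tendsto (fun h : ℝ => Real.sign (badF (x + h) - badF x)) (𝓝[T2] 0) (𝓝 L) :=
    hL.mono_left (nhdsWithin_mono _ fun h hh => hh.1)
  have e1 : L = 1 := by
    refine tendsto_nhds_unique (l1.congr' ?_) tendsto_const_nhds
    exact eventually_mem_nhdsWithin.mono fun h hh => sign_on_rat hx hh.2
  have e2 : L = 0 := by
    refine tendsto_nhds_unique (l2.congr' ?_) tendsto_const_nhds
    exact eventually_mem_nhdsWithin.mono fun h hh => sign_on_irr hx hh.2
  rw [e1] at e2; norm_num at e2

lemma not_leftDet {x : ℝ} (hx : Irrational x) : ¬ ∃ L, HasLeftDet badF x L := by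
  rintro ⟨L, hL⟩
  set T1 : Set ℝ := {h | h < 0 ∧ ∃ q : ℚ, (q:ℝ) = x + h} with hT1def
  set T2 : Set ℝ := {h | h < 0 ∧ Irrational (x + h)} with hT2def
  haveI n1 : (𝓝[T1] (0:ℝ)).NeBot := neBot_aux T1 (by
    intro ε hε
    obtain ⟨q, hq1, hq2⟩ := exists_rat_btwn (show x - ε < x by linarith)
    exact ⟨(q:ℝ) - x, ⟨by linarith, q, by ring⟩, by
      rw [abs_of_neg (by linarith)]; linarith⟩)
  haveI n2 : (𝓝[T2] (0:ℝ)).NeBot := neBot_aux T2 (by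
    intro ε hε
    obtain ⟨q, hq1, hq2⟩ := exists_rat_btwn (show -ε < (0:ℝ) by linarith)
    refine ⟨(q:ℝ), ⟨hq2, hx.add_ratCast q⟩, by rw [abs_of_neg hq2]; linarith⟩)
  have l1 : Tendsto (fun h : ℝ => Real.sign (badF (x + h) - badF x)) (𝓝[T1] 0) (𝓝 L) :=
    hL.mono_left (nhdsWithin_mono _ fun h hh => hh.1)
  have l2 : Tendsto (fun h : ℝ => Real.sign (badF (x + h) - badF x)) (𝓝[T2] 0) (𝓝 L) :=
    hL.mono_left (nhdsWithin_mono _ fun h hh => hh.1)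
  have e1 : L = 1 := by
    refine tendsto_nhds_unique (l1.congr' ?_) tendsto_const_nhds
    exact eventually_mem_nhdsWithin.mono fun h hh => sign_on_rat hx hh.2
  have e2 : L = 0 := by
    refine tendsto_nhds_unique (l2.congr' ?_) tendsto_const_nhds
    exact eventually_mem_nhdsWithin.mono fun h hh => sign_on_irr hx hh.2
  rw [e1] at e2; norm_num at e2

open MeasureTheory in
def sset (k q : ℕ) : Set ℝ :=
  {x : ℝ | ∃ p : ℤ, |x - (p:ℝ)/(q:ℝ)| < (k:ℝ)/(q:ℝ)^3} ∩ Set.Icc 0 1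

lemma sset_zero (k : ℕ) : sset k 0 = ∅ := by
  rw [Set.eq_empty_iff_forall_notMem]
  rintro x ⟨⟨p, hp⟩, -⟩
  norm_num at hp
  exact absurd hp (not_lt.2 (abs_nonneg _))

open MeasureTheory in
lemma measure_sset_le (k q : ℕ) :
    volume (sset k q) ≤ ENNReal.ofReal ((4*(k:ℝ)*((k:ℝ)+1)) * (1/(q:ℝ)^2)) := by
  rcases Nat.eq_zero_or_pos q with rfl | hq
  · rw [sset_zero]; simp
  have hq0 : (0:ℝ) < q := by exact_mod_cast hq
  have hq3 : (1:ℝ) ≤ (q:ℝ)^3 := one_le_pow₀ (by exact_mod_cast hq)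
  have hsub : sset k q ⊆
      ⋃ p ∈ Finset.Icc (-(k:ℤ)*q) (((k:ℤ)+1)*q), Metric.ball ((p:ℝ)/q) ((k:ℝ)/(q:ℝ)^3) := by
    rintro x ⟨⟨p, hp⟩, hx0, hx1⟩
    have hkle : (k:ℝ)/(q:ℝ)^3 ≤ k := div_le_self (Nat.cast_nonneg k) hq3
    have habs := abs_lt.mp hp
    have h1 : (p:ℝ)/q < 1 + k := by linarith
    have h2 : -(k:ℝ) < (p:ℝ)/q := by linarith
    have hp1 : (p:ℝ) < ((k:ℝ)+1)*q := by
      have := (div_lt_iff₀ hq0).mp h1; linarith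
    have hp2 : -(k:ℝ)*q < (p:ℝ) := by
      have := (lt_div_iff₀ hq0).mp h2; linarith
    have hmem : p ∈ Finset.Icc (-(k:ℤ)*q) (((k:ℤ)+1)*q) := by
      rw [Finset.mem_Icc]
      constructor
      · exact_mod_cast le_of_lt (show ((-(k:ℤ)*q : ℤ):ℝ) < p by push_cast; linarith)
      · exact_mod_cast le_of_lt (show ((p:ℤ):ℝ) < (((k:ℤ)+1)*q : ℤ) by push_cast; linarith)
    exact Set.mem_biUnion hmem (by rw [Metric.mem_ball, Real.dist_eq]; exact hp)
  calc volume (sset k q) ≤ _ := measure_mono hsub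
    _ ≤ ∑ p ∈ Finset.Icc (-(k:ℤ)*q) (((k:ℤ)+1)*q),
          volume (Metric.ball ((p:ℝ)/q) ((k:ℝ)/(q:ℝ)^3)) := measure_biUnion_finset_le _ _
    _ = (Finset.Icc (-(k:ℤ)*q) (((k:ℤ)+1)*q)).card • ENNReal.ofReal (2*((k:ℝ)/(q:ℝ)^3)) := by
        simp [Real.volume_ball, Finset.sum_const]
    _ ≤ ((2*k+2)*q : ℕ) • ENNReal.ofReal (2*((k:ℝ)/(q:ℝ)^3)) := by
        have hcard : (Finset.Icc (-(k:ℤ)*q) (((k:ℤ)+1)*q)).card ≤ (2*k+2)*q := by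
          rw [Int.card_Icc]
          have hq1 : (1:ℤ) ≤ q := by exact_mod_cast hq
          have : (((k:ℤ)+1)*q + 1 - (-(k:ℤ)*q)) ≤ ((2*k+2)*q : ℕ) := by
            push_cast; nlinarith
          omega
        simp only [smul_eq_mul, nsmul_eq_mul]
        exact mul_le_mul_left (by exact_mod_cast hcard) _
    _ ≤ ENNReal.ofReal ((4*(k:ℝ)*((k:ℝ)+1)) * (1/(q:ℝ)^2)) := by
        rw [nsmul_eq_mul, ← ENNReal.ofReal_natCast, ← ENNReal.ofReal_mul (by positivity)]
        apply ENNReal.ofReal_le_ofReal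
        have hne : (q:ℝ) ≠ 0 := ne_of_gt hq0
        have : (((2*k+2)*q : ℕ) : ℝ) * (2*((k:ℝ)/(q:ℝ)^3)) = (4*(k:ℝ)*((k:ℝ)+1)) * (1/(q:ℝ)^2) := by
          push_cast; field_simp; ring
        linarith [this.le, this.ge]

open MeasureTheory in
lemma volume_limsup_zero (k : ℕ) : volume (limsup (sset k) atTop) = 0 := by
  apply measure_limsup_atTop_eq_zero
  have hsum : Summable (fun q : ℕ => (4*(k:ℝ)*((k:ℝ)+1)) * (1/(q:ℝ)^2)) :=
    (Real.summable_one_div_nat_pow.mpr (by norm_num)).mul_left _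
  have heq := ENNReal.ofReal_tsum_of_nonneg (fun q => by positivity) hsum
  refine ne_top_of_le_ne_top (b := ENNReal.ofReal (∑' q : ℕ, (4*(k:ℝ)*((k:ℝ)+1)) * (1/(q:ℝ)^2)))
    ENNReal.ofReal_ne_top ?_
  rw [heq]
  exact ENNReal.tsum_le_tsum fun q => measure_sset_le k q

lemma finite_rat_den_lt (N : ℕ) (x : ℝ) : {r : ℚ | r.den < N ∧ |(r:ℝ) - x| ≤ 1}.Finite := by
  set M : ℤ := ⌈(|x|+1) * N⌉ with hM
  apply Set.Finite.of_finite_image (f := fun r : ℚ => (r.num, r.den))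
  · apply Set.Finite.subset ((Set.finite_Icc (-M) M).prod (Set.finite_Iio N))
    rintro ⟨a, b⟩ ⟨r, ⟨hden, hnear⟩, heq⟩
    obtain ⟨rfl, rfl⟩ : r.num = a ∧ r.den = b := by
      simpa [Prod.ext_iff] using heq
    have hrb : |(r:ℝ)| ≤ |x| + 1 := by
      have h := abs_sub_abs_le_abs_sub (r:ℝ) x
      linarith
    have hdenpos : (0:ℝ) < r.den := by exact_mod_cast r.den_pos
    have hnum : |(r.num:ℝ)| ≤ (|x|+1) * N := by
      have h1 : |(r.num:ℝ)| = |(r:ℝ)| * r.den := by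
        rw [Rat.cast_def, abs_div, abs_of_pos hdenpos, div_mul_cancel₀]
        exact ne_of_gt hdenpos
      have hden' : (r.den:ℝ) ≤ N := by exact_mod_cast hden.le
      rw [h1]
      exact mul_le_mul hrb hden' (le_of_lt hdenpos) (by positivity)
    have hnum' : |(r.num:ℝ)| ≤ (M:ℝ) := le_trans hnum (Int.le_ceil _)
    have := abs_le.mp hnum'
    constructor
    · constructor
      · exact_mod_cast this.1
      · exact_mod_cast this.2
    · exact hden
  · intro r _ s _ h
    obtain ⟨h1, h2⟩ : r.num = s.num ∧ r.den = s.den := by simpa [Prod.ext_iff] using h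
    exact Rat.ext h1 h2

lemma exists_good_delta {x : ℝ} (hx : Irrational x) (N : ℕ) :
    ∃ δ > 0, δ ≤ 1 ∧ ∀ r : ℚ, |(r:ℝ) - x| < δ → N ≤ r.den := by
  set S : Set ℝ := ((↑) : ℚ → ℝ) '' {r : ℚ | r.den < N ∧ |(r:ℝ) - x| ≤ 1} with hS
  have hfin : S.Finite := (finite_rat_den_lt N x).image _
  have hxn : x ∈ Sᶜ := by
    rintro ⟨r, -, rfl⟩
    exact Rat.not_irrational r hx
  obtain ⟨δ, hδ, hball⟩ := Metric.isOpen_iff.mp hfin.isClosed.isOpen_compl x hxn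
  refine ⟨min δ 1, lt_min hδ one_pos, min_le_right _ _, ?_⟩
  intro r hr
  by_contra hcon
  push_neg at hcon
  have hmem : (r:ℝ) ∈ S := ⟨r, ⟨hcon, le_of_lt (lt_of_lt_of_le hr (min_le_right _ _))⟩, rfl⟩
  have : (r:ℝ) ∈ Metric.ball x δ := by
    rw [Metric.mem_ball, Real.dist_eq]
    exact lt_of_lt_of_le hr (min_le_left _ _)
  exact hball this hmem

open MeasureTheory in
lemma ae_deriv :
    ∀ᵐ x ∂(volume.restrict (Set.Icc (0:ℝ) 1)), HasDerivAt badF 0 x := by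
  set μ := volume.restrict (Set.Icc (0:ℝ) 1) with hμ
  have h1 : ∀ᵐ x ∂μ, x ∈ Set.Icc (0:ℝ) 1 := ae_restrict_mem measurableSet_Icc
  have h2 : ∀ᵐ x ∂μ, Irrational x := by
    rw [ae_iff]
    have hset : {x : ℝ | ¬ Irrational x} = Set.range ((↑) : ℚ → ℝ) := by
      ext y; simp [Irrational]
    rw [hset]
    have hv : volume (Set.range ((↑) : ℚ → ℝ)) = 0 :=
      (Set.countable_range _).measure_zero _
    exact le_antisymm (hv ▸ Measure.restrict_apply_le _ _) (zero_le)
  have h3 : ∀ᵐ x ∂μ, ∀ k : ℕ, x ∉ limsup (sset k) atTop := by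
    rw [MeasureTheory.ae_all_iff]
    intro k
    rw [ae_iff]
    have hid : {a : ℝ | ¬ a ∉ limsup (sset k) atTop} = limsup (sset k) atTop := by
      ext a; simp
    rw [hid]
    exact le_antisymm ((volume_limsup_zero k) ▸ Measure.restrict_apply_le _ _) (zero_le)
  filter_upwards [h1, h2, h3] with x hx1 hx2 hx3
  rw [hasDerivAt_iff_tendsto_slope, Metric.tendsto_nhdsWithin_nhds]
  intro ε hε
  obtain ⟨k, hk⟩ := exists_nat_gt (1/ε)
  have hk0 : (0:ℝ) < k := lt_trans (by positivity) hk
  have hkε : 1/(k:ℝ) < ε := by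
    rw [div_lt_iff₀ hε] at hk
    rw [div_lt_iff₀ hk0]
    linarith
  have hfreq : ∀ᶠ q in atTop, x ∉ sset k q := by
    have h := hx3 k
    rw [mem_limsup_iff_frequently_mem, Filter.not_frequently] at h
    exact h
  obtain ⟨N, hN⟩ := eventually_atTop.mp hfreq
  obtain ⟨δ, hδ0, hδ1, hδ⟩ := exists_good_delta hx2 N
  refine ⟨δ, hδ0, ?_⟩
  intro y _ hdist
  rw [Real.dist_eq, sub_zero]
  by_cases hyirr : Irrational y
  · rw [slope_def_field]
    simpa [badF_irrational hyirr, badF_irrational hx2] using hε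
  · obtain ⟨r, rfl⟩ := not_not.mp hyirr
    have hrden : N ≤ r.den := hδ r (by rwa [Real.dist_eq] at hdist)
    have hnotin := hN r.den hrden
    have hden0 : (0:ℝ) < r.den := by exact_mod_cast r.den_pos
    have hxs : (k:ℝ)/(r.den:ℝ)^3 ≤ |x - (r.num:ℝ)/(r.den:ℝ)| := by
      by_contra hcon
      push_neg at hcon
      exact hnotin ⟨⟨r.num, hcon⟩, hx1⟩
    have hxr : (k:ℝ)/(r.den:ℝ)^3 ≤ |(r:ℝ) - x| := by
      rw [abs_sub_comm, Rat.cast_def]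
      exact hxs
    have hpos : (0:ℝ) < (k:ℝ)/(r.den:ℝ)^3 := by positivity
    rw [slope_def_field, badF_irrational hx2, sub_zero, badF_rat, abs_div,
      abs_of_pos (show (0:ℝ) < 1/(r.den:ℝ)^3 by positivity)]
    calc 1/(r.den:ℝ)^3 / |(r:ℝ) - x| ≤ 1/(r.den:ℝ)^3 / ((k:ℝ)/(r.den:ℝ)^3) := by
          gcongr
      _ = 1/(k:ℝ) := by field_simp
      _ < ε := hkε

/-- There exists a function on `[0,1]` (extended to `ℝ`) vanishing at irrationals and
equal to `1/n³` at rationals with lowest-terms denominator `n`, which is differentiable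
(with derivative `0`) almost everywhere on `[0,1]`, yet tendable at no irrational
point of `[0,1]` (neither one-sided detachment exists there). -/
theorem exists_ae_differentiable_nowhere_tendable :
    ∃ f : ℝ → ℝ,
      (∀ x : ℝ, Irrational x → f x = 0) ∧
      (∀ q : ℚ, f (q : ℝ) = 1 / (q.den : ℝ) ^ 3) ∧
      (∀ᵐ x ∂(MeasureTheory.volume.restrict (Set.Icc (0:ℝ) 1)), HasDerivAt f 0 x) ∧
      (∀ x ∈ Set.Icc (0:ℝ) 1, Irrational x →
        (¬ ∃ Lp : ℝ, HasRightDet f x Lp) ∧ (¬ ∃ Lm : ℝ, HasLeftDet f x Lm)) := by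
  exact ⟨badF, fun x hx => badF_irrational hx, badF_rat, ae_deriv,
    fun x _ hx => ⟨not_rightDet hx, not_leftDet hx⟩⟩
end
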